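/- arXiv:1301.1639 — 7 statements merged into one kernel-verified Lean document; each statement's English description precedes it below -/
import Mathlib

section
/- Let λ ∈ ℂ with λ ≠ 0, let R : ℂ × ℂ → ℂ be continuous, let γ : [0,1] → ℂ be continuously differentiable, and let w : [0,1] → ℂ be differentiable with w'(t) = γ'(t)·(1 + R(exp(γ(t)), exp(w(t))))/λ for all t ∈ [0,1]. Then exp(w(1) − γ(1)/λ) = exp(w(0) − γ(0)/λ) · exp( (1/λ)·∫₀¹ R(exp(γ(t)), exp(w(t)))·γ'(t) dt ). (This is the relation D_R = D₀ × exp ∫ R τ between the Dulac map of X_R and that of the linear model X₀.) -/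
/-- The relation `D_R = D₀ × exp ∫ R τ` between the Dulac map of `X_R` and that of
the linear model `X₀`, in logarithmic coordinates: along a tangent path,
`exp(w(1) − γ(1)/λ) = exp(w(0) − γ(0)/λ) · exp((1/λ)∫₀¹ R(exp γ, exp w)·γ')`. -/
theorem dulac_vs_linear_model
    (lam : ℂ) (hlam : lam ≠ 0)
    (R : ℂ × ℂ → ℂ) (hR : Continuous R)
    (γ γ' : ℝ → ℂ)
    (hγ : ∀ t ∈ Set.Icc (0:ℝ) 1, HasDerivAt γ (γ' t) t)
    (hγ' : ContinuousOn γ' (Set.Icc (0:ℝ) 1))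
    (w : ℝ → ℂ)
    (hw : ∀ t ∈ Set.Icc (0:ℝ) 1,
      HasDerivAt w (γ' t * (1 + R (Complex.exp (γ t), Complex.exp (w t))) / lam) t) :
    Complex.exp (w 1 - γ 1 / lam)
      = Complex.exp (w 0 - γ 0 / lam)
        * Complex.exp ((1 / lam) * ∫ t in (0:ℝ)..1,
            R (Complex.exp (γ t), Complex.exp (w t)) * γ' t) := by
  set g : ℝ → ℂ := fun t => R (Complex.exp (γ t), Complex.exp (w t)) * γ' t with hg
  have hγc : ContinuousOn γ (Set.Icc (0:ℝ) 1) := fun t ht =>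
    ((hγ t ht).continuousAt).continuousWithinAt
  have hwc : ContinuousOn w (Set.Icc (0:ℝ) 1) := fun t ht =>
    ((hw t ht).continuousAt).continuousWithinAt
  have hgc : ContinuousOn g (Set.Icc (0:ℝ) 1) :=
    (hR.comp_continuousOn
      ((Complex.continuous_exp.comp_continuousOn hγc).prodMk
        (Complex.continuous_exp.comp_continuousOn hwc))).mul hγ'
  have hf : ∀ t ∈ Set.Icc (0:ℝ) 1,
      HasDerivAt (fun t => w t - γ t / lam) (g t / lam) t := by
    intro t ht
    have := (hw t ht).sub ((hγ t ht).div_const lam)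
    refine this.congr_deriv ?_
    simp only [hg]
    ring
  have hint : IntervalIntegrable (fun t => g t / lam) MeasureTheory.volume 0 1 := by
    apply ContinuousOn.intervalIntegrable
    rw [Set.uIcc_of_le (by norm_num)]
    exact hgc.div_const lam
  have key : (∫ t in (0:ℝ)..1, g t / lam) = (w 1 - γ 1 / lam) - (w 0 - γ 0 / lam) :=
    intervalIntegral.integral_eq_sub_of_hasDerivAt
      (fun t ht => hf t (by rwa [Set.uIcc_of_le (by norm_num)] at ht)) hint
  have hdiv : (∫ t in (0:ℝ)..1, g t / lam) = (1 / lam) * ∫ t in (0:ℝ)..1, g t := by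
    simp [div_eq_mul_inv, intervalIntegral.integral_mul_const, mul_comm, one_mul]
  rw [← Complex.exp_add, ← hdiv, key]
  ring_nf
end

section
/- Let λ ∈ ℂ with λ ≠ 0, let a be a positive integer, let N_R ≥ 0, let z₀ ∈ ℂ, let θ ∈ ℂ with |θ| = 1 and Re θ ≠ 0, and let T > 0. Let R : ℂ × ℂ → ℂ be continuous and let w : [0,T] → ℂ be differentiable with w'(t) = (θ/λ)·(1 + R(exp(z₀ + tθ), exp(w(t)))) for all t ∈ [0,T], and assume |R(exp(z₀ + tθ), exp(w(t)))| ≤ N_R·exp(a·Re(z₀ + tθ)) for all t ∈ [0,T]. Then for every t ∈ [0,T]: |w(t) − w(0) − t·θ/λ| ≤ (exp(a·Re z₀)·N_R)/(|λ|·|Re θ|·a) · |1 − exp(a·t·Re θ)|. -/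
/-- Growth estimate for the lift of a non-vertical ray `t ↦ z₀ + tθ` in the
foliation of `E^* X_R`: if `|R∘E| ≤ N_R · exp(a · Re z)` along the lift, then
`|w(t) − w(0) − tθ/λ| ≤ exp(a Re z₀)·N_R/(|λ|·|Re θ|·a) · |1 − exp(a·t·Re θ)|`. -/
theorem lift_growth_estimate_nonvertical
    (lam : ℂ) (hlam : lam ≠ 0)
    (a : ℕ) (ha : 0 < a)
    (NR : ℝ) (hNR : 0 ≤ NR)
    (z₀ θ : ℂ) (hθ : ‖θ‖ = 1) (hθre : θ.re ≠ 0)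
    (T : ℝ) (hT : 0 < T)
    (R : ℂ × ℂ → ℂ) (hR : Continuous R)
    (w : ℝ → ℂ)
    (hw : ∀ t ∈ Set.Icc (0:ℝ) T,
      HasDerivAt w
        (θ / lam * (1 + R (Complex.exp (z₀ + (t:ℂ) * θ), Complex.exp (w t)))) t)
    (hbound : ∀ t ∈ Set.Icc (0:ℝ) T,
      ‖R (Complex.exp (z₀ + (t:ℂ) * θ), Complex.exp (w t))‖
        ≤ NR * Real.exp ((a : ℝ) * (z₀ + (t:ℂ) * θ).re)) :
    ∀ t ∈ Set.Icc (0:ℝ) T,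
      ‖w t - w 0 - (t:ℂ) * θ / lam‖
        ≤ Real.exp ((a : ℝ) * z₀.re) * NR / (‖lam‖ * |θ.re| * (a : ℝ))
          * |1 - Real.exp ((a : ℝ) * t * θ.re)| := by
  intro t ht
  obtain ⟨ht0, htT⟩ := ht
  have hwc : ContinuousOn w (Set.Icc 0 T) := fun s hs =>
    ((hw s hs).continuousAt).continuousWithinAt
  set c : ℝ := (a : ℝ) * θ.re with hc
  have hcne : c ≠ 0 := mul_ne_zero (Nat.cast_ne_zero.mpr ha.ne') hθre
  set K : ℝ := Real.exp ((a : ℝ) * z₀.re) * NR / ‖lam‖ with hK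
  have hK0 : 0 ≤ K := by positivity
  set F : ℝ → ℂ := fun s => θ / lam * R (Complex.exp (z₀ + (s:ℂ) * θ), Complex.exp (w s))
    with hF
  have hFc : ContinuousOn F (Set.Icc 0 T) := by
    apply continuousOn_const.mul
    apply hR.comp_continuousOn
    apply ContinuousOn.prodMk
    · exact (Complex.continuous_exp.comp (by continuity)).continuousOn
    · exact Complex.continuous_exp.comp_continuousOn hwc
  have hsub : Set.uIcc (0:ℝ) t ⊆ Set.Icc 0 T := by
    rw [Set.uIcc_of_le ht0]
    exact Set.Icc_subset_Icc le_rfl htT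
  -- fundamental theorem of calculus for f s = w s - s * θ / lam
  have hder : ∀ s ∈ Set.uIcc (0:ℝ) t,
      HasDerivAt (fun s : ℝ => w s - (s:ℂ) * θ / lam) (F s) s := by
    intro s hs
    have h1 : HasDerivAt (fun s : ℝ => (s:ℂ) * θ / lam) (θ / lam) s := by
      have : HasDerivAt (fun s : ℝ => ((s:ℝ):ℂ)) 1 s := Complex.ofRealCLM.hasDerivAt
      simpa [mul_div_assoc] using this.mul_const (θ / lam)
    have := (hw s (hsub hs)).sub h1
    refine this.congr_deriv ?_
    simp [hF]
    ring
  have hInt : IntervalIntegrable F MeasureTheory.volume 0 t :=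
    (hFc.mono hsub).intervalIntegrable
  have hFTC : ∫ s in (0:ℝ)..t, F s
      = (w t - (t:ℂ) * θ / lam) - (w 0 - (0:ℂ) * θ / lam) :=
    intervalIntegral.integral_eq_sub_of_hasDerivAt hder hInt
  have heq : w t - w 0 - (t:ℂ) * θ / lam = ∫ s in (0:ℝ)..t, F s := by
    rw [hFTC]; ring
  -- bound the norm of the integrand
  have hFbound : ∀ s ∈ Set.Icc (0:ℝ) t, ‖F s‖ ≤ K * Real.exp (c * s) := by
    intro s hs
    have hs' : s ∈ Set.Icc (0:ℝ) T := ⟨hs.1, hs.2.trans htT⟩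
    have hre : (z₀ + (s:ℂ) * θ).re = z₀.re + s * θ.re := by simp
    have := hbound s hs'
    calc ‖F s‖ = ‖θ‖ / ‖lam‖
          * ‖R (Complex.exp (z₀ + (s:ℂ) * θ), Complex.exp (w s))‖ := by
          simp [hF, map_mul, map_div₀]
      _ ≤ 1 / ‖lam‖ * (NR * Real.exp ((a:ℝ) * (z₀ + (s:ℂ) * θ).re)) := by
          rw [hθ]
          apply mul_le_mul_of_nonneg_left this
          positivity
      _ = K * Real.exp (c * s) := by
          rw [hre, hK, hc]
          rw [mul_add, Real.exp_add]
          field_simp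
  -- integral of the bound
  have hgInt : IntervalIntegrable (fun s => K * Real.exp (c * s)) MeasureTheory.volume 0 t :=
    (Continuous.intervalIntegrable (by continuity) 0 t)
  have hgval : ∫ s in (0:ℝ)..t, K * Real.exp (c * s)
      = K / c * (Real.exp (c * t) - 1) := by
    have hder2 : ∀ s ∈ Set.uIcc (0:ℝ) t,
        HasDerivAt (fun s : ℝ => K / c * Real.exp (c * s)) (K * Real.exp (c * s)) s := by
      intro s hs
      have h1 : HasDerivAt (fun s : ℝ => Real.exp (c * s)) (c * Real.exp (c * s)) s := by
        simpa [mul_comm] using ((hasDerivAt_id s).const_mul c).exp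
      have := h1.const_mul (K / c)
      refine this.congr_deriv ?_
      rw [← mul_assoc, div_mul_cancel₀ K hcne]
    rw [intervalIntegral.integral_eq_sub_of_hasDerivAt hder2 hgInt]
    simp
    ring
  -- combine
  rw [heq]
  have h1 : ‖∫ s in (0:ℝ)..t, F s‖ ≤ ∫ s in (0:ℝ)..t, ‖F s‖ :=
    intervalIntegral.norm_integral_le_integral_norm ht0
  have h2 : ∫ s in (0:ℝ)..t, ‖F s‖ ≤ ∫ s in (0:ℝ)..t, K * Real.exp (c * s) :=
    intervalIntegral.integral_mono_on ht0 hInt.norm hgInt hFbound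
  have h3 : K / c * (Real.exp (c * t) - 1)
      = Real.exp ((a : ℝ) * z₀.re) * NR / (‖lam‖ * |θ.re| * (a : ℝ))
        * |1 - Real.exp ((a : ℝ) * t * θ.re)| := by
    have hct : (a : ℝ) * t * θ.re = c * t := by rw [hc]; ring
    rw [hct]
    have hrhs : Real.exp ((a : ℝ) * z₀.re) * NR / (‖lam‖ * |θ.re| * (a : ℝ))
        = K / |c| := by
      rw [hK, hc, abs_mul, Nat.abs_cast, div_div]
      congr 1
      ring
    rw [hrhs]
    rcases lt_or_gt_of_ne hcne with hneg | hpos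
    · have h4 : c * t ≤ 0 := mul_nonpos_of_nonpos_of_nonneg hneg.le ht0
      have h5 : Real.exp (c * t) ≤ 1 := Real.exp_le_one_iff.mpr h4
      rw [abs_of_neg hneg, abs_of_nonneg (by linarith), div_neg]
      ring
    · have h4 : 0 ≤ c * t := mul_nonneg hpos.le ht0
      have h5 : 1 ≤ Real.exp (c * t) := Real.one_le_exp h4
      rw [abs_of_pos hpos, abs_of_nonpos (by linarith)]
      ring
  calc ‖∫ s in (0:ℝ)..t, F s‖ ≤ ∫ s in (0:ℝ)..t, K * Real.exp (c * s) := h1.trans h2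
    _ = _ := by rw [hgval, h3]
end

section
/- Let λ ∈ ℂ with λ ≠ 0, let a be a positive integer, let ρ > 0, let N_R ≥ 0, and let 0 < δ < π/2 with cos δ > N_R·ρ^a. Set ϑ := −λ/|λ| and let θ = ϑ·exp(iβ) for some real β with |β| ≤ δ. Let z₀ ∈ ℂ, T > 0, let R : ℂ × ℂ → ℂ be continuous, and let w : [0,T] → ℂ be differentiable with w'(t) = (θ/λ)·(1 + R(exp(z₀ + tθ), exp(w(t)))) for all t ∈ [0,T]; assume |R(exp(z₀ + tθ), exp(w(t)))| ≤ N_R·ρ^a for all t ∈ [0,T]. Then for every t ∈ [0,T]: d/dt Re(w(t)) ≤ −(cos δ − N_R·ρ^a)/|λ| < 0; in particular t ↦ Re(w(t)) is strictly decreasing. (This says that the searchlight beam S(z₀, ϑ, δ) of direction ϑ = −λ/|λ| and aperture 2δ with δ < arccos(N_R ρ^a) is a stability beam.) -/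
/-- The searchlight beam `S(z₀, ϑ, δ)` with direction `ϑ = −λ/|λ|` and aperture
`2δ`, `cos δ > N_R·ρ^a`, is a stability beam: along the lift of any ray of
direction `θ = ϑ·exp(iβ)`, `|β| ≤ δ`, the derivative of `Re w` is at most
`−(cos δ − N_R ρ^a)/|λ| < 0`; in particular `t ↦ Re (w t)` is strictly decreasing. -/
theorem stability_beam
    (lam : ℂ) (hlam : lam ≠ 0)
    (a : ℕ) (ha : 0 < a)
    (ρ : ℝ) (hρ : 0 < ρ)
    (NR : ℝ) (hNR : 0 ≤ NR)
    (δ : ℝ) (hδ0 : 0 < δ) (hδπ : δ < Real.pi / 2)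
    (hcos : NR * ρ ^ a < Real.cos δ)
    (β : ℝ) (hβ : |β| ≤ δ)
    (θ : ℂ) (hθ : θ = -lam / ((‖lam‖ : ℝ) : ℂ) * Complex.exp (β * Complex.I))
    (z₀ : ℂ) (T : ℝ) (hT : 0 < T)
    (R : ℂ × ℂ → ℂ) (hR : Continuous R)
    (w : ℝ → ℂ)
    (hw : ∀ t ∈ Set.Icc (0:ℝ) T,
      HasDerivAt w
        (θ / lam * (1 + R (Complex.exp (z₀ + (t:ℂ) * θ), Complex.exp (w t)))) t)
    (hbound : ∀ t ∈ Set.Icc (0:ℝ) T,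
      ‖R (Complex.exp (z₀ + (t:ℂ) * θ), Complex.exp (w t))‖
        ≤ NR * ρ ^ a) :
    (∀ t ∈ Set.Icc (0:ℝ) T, ∀ d : ℝ,
        HasDerivAt (fun s => (w s).re) d t →
          d ≤ -(Real.cos δ - NR * ρ ^ a) / ‖lam‖)
      ∧ -(Real.cos δ - NR * ρ ^ a) / ‖lam‖ < 0
      ∧ StrictAntiOn (fun t => (w t).re) (Set.Icc (0:ℝ) T) := by
  have habs : (0:ℝ) < ‖lam‖ := norm_pos_iff.mpr hlam
  have hnum : 0 < Real.cos δ - NR * ρ ^ a := by linarith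
  have hlt : -(Real.cos δ - NR * ρ ^ a) / ‖lam‖ < 0 :=
    div_neg_of_neg_of_pos (by linarith) habs
  have hθlam : θ / lam = -Complex.exp (β * Complex.I) / ((‖lam‖ : ℝ) : ℂ) := by
    rw [hθ]
    field_simp
  -- key real-part estimate
  have key : ∀ t ∈ Set.Icc (0:ℝ) T,
      (θ / lam * (1 + R (Complex.exp (z₀ + (t:ℂ) * θ), Complex.exp (w t)))).re
        ≤ -(Real.cos δ - NR * ρ ^ a) / ‖lam‖ := by
    intro t ht
    set r := R (Complex.exp (z₀ + (t:ℂ) * θ), Complex.exp (w t)) with hr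
    have hrb : ‖r‖ ≤ NR * ρ ^ a := hbound t ht
    have hre : (θ / lam * (1 + r)).re
        = -(Real.cos β + (Complex.exp (β * Complex.I) * r).re) / ‖lam‖ := by
      rw [hθlam]
      have h : (-Complex.exp (↑β * Complex.I) / ((‖lam‖ : ℝ) : ℂ) * (1 + r))
          = -((Complex.exp (↑β * Complex.I) * (1 + r)) / ((‖lam‖ : ℝ) : ℂ)) := by
        ring
      rw [h, Complex.neg_re, Complex.div_ofReal_re, mul_add, mul_one,
        Complex.add_re, Complex.exp_ofReal_mul_I_re, neg_div]
    rw [hre]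
    have h1 : Real.cos δ ≤ Real.cos β := by
      rw [show Real.cos β = Real.cos |β| from (Real.cos_abs β).symm]
      exact Real.cos_le_cos_of_nonneg_of_le_pi (abs_nonneg β) (by linarith [Real.pi_pos]) hβ
    have h2 : -(NR * ρ ^ a) ≤ (Complex.exp (β * Complex.I) * r).re := by
      have h3 := Complex.abs_re_le_norm (Complex.exp (β * Complex.I) * r)
      have habs1 : ‖Complex.exp (β * Complex.I) * r‖ = ‖r‖ := by
        rw [norm_mul, Complex.norm_exp_ofReal_mul_I, one_mul]
      rw [habs1] at h3
      linarith [neg_abs_le ((Complex.exp (β * Complex.I) * r).re)]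
    rw [neg_div, neg_div, neg_le_neg_iff]
    exact (div_le_div_iff_of_pos_right habs).mpr (by linarith)
  -- derivative of real part
  have hwre : ∀ t ∈ Set.Icc (0:ℝ) T,
      HasDerivAt (fun s => (w s).re)
        ((θ / lam * (1 + R (Complex.exp (z₀ + (t:ℂ) * θ), Complex.exp (w t)))).re) t := by
    intro t ht
    exact (Complex.reCLM.hasFDerivAt.comp_hasDerivAt t (hw t ht))
  refine ⟨?_, hlt, ?_⟩
  · intro t ht d hd
    have := hd.unique (hwre t ht)
    rw [this]
    exact key t ht
  · have hcont : ContinuousOn (fun t => (w t).re) (Set.Icc (0:ℝ) T) := fun t ht =>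
      ((hwre t ht).continuousAt).continuousWithinAt
    apply strictAntiOn_of_deriv_neg (convex_Icc 0 T) hcont
    intro t ht
    rw [interior_Icc] at ht
    have ht' : t ∈ Set.Icc (0:ℝ) T := Set.mem_Icc_of_Ioo ht
    rw [(hwre t ht').deriv]
    exact lt_of_le_of_lt (key t ht') hlt
end

section
/- Let λ ∈ ℂ with λ ≠ 0, let a be a positive integer, let ρ, r > 0, let N_R ≥ 0, and let 0 < δ < π/2 with cos δ > N_R·ρ^a. Let R be holomorphic on the polydisc {(x,y) ∈ ℂ² : |x| < ρ, |y| < r} with |R(x,y)| ≤ N_R·|x|^a there. Set ϑ := −λ/|λ| and let θ = ϑ·exp(iβ) for some real β with |β| ≤ δ. Let z₀, w₀ ∈ ℂ with Re z₀ < log ρ and Re w₀ < log r, and let T > 0 be such that Re(z₀ + tθ) < log ρ for all t ∈ [0,T]. Then there exists a differentiable w : [0,T] → ℂ with w(0) = w₀, satisfying w'(t) = (θ/λ)·(1 + R(exp(z₀ + tθ), exp(w(t)))) for all t ∈ [0,T], and such that t ↦ Re(w(t)) is strictly decreasing; in particular Re(w(t)) < log r for all t, so the whole ray segment lifts inside the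 domain. (Outgoing rays of a stability beam lift completely in the leaf as long as they do not cross {Re z = log ρ}.) -/
open Set Metric Complex

noncomputable def rlcPsi (d : ℝ) (z : ℂ) : ℂ := z - ((max 0 (z.re - d) : ℝ) : ℂ)

lemma rlcPsi_re_le (d : ℝ) (z : ℂ) : (rlcPsi d z).re ≤ d := by
  simp only [rlcPsi, Complex.sub_re, Complex.ofReal_re]
  have := le_max_right (0:ℝ) (z.re - d)
  linarith

lemma rlcPsi_eq (d : ℝ) {z : ℂ} (h : z.re ≤ d) : rlcPsi d z = z := by
  simp only [rlcPsi, max_eq_left (sub_nonpos.2 h), Complex.ofReal_zero, sub_zero]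

lemma rlcPsi_lip (d : ℝ) (z₁ z₂ : ℂ) : ‖rlcPsi d z₁ - rlcPsi d z₂‖ ≤ 2 * ‖z₁ - z₂‖ := by
  have h1 : rlcPsi d z₁ - rlcPsi d z₂
      = (z₁ - z₂) - ((max 0 (z₁.re - d) - max 0 (z₂.re - d) : ℝ) : ℂ) := by
    simp only [rlcPsi, Complex.ofReal_sub]; ring
  have h2 : |max 0 (z₁.re - d) - max 0 (z₂.re - d)| ≤ |z₁.re - z₂.re| := by
    rw [max_comm 0 (z₁.re - d), max_comm 0 (z₂.re - d)]
    have := abs_max_sub_max_le_abs (z₁.re - d) (z₂.re - d) 0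
    simpa using this
  have h3 : |z₁.re - z₂.re| ≤ ‖z₁ - z₂‖ := by
    have := Complex.abs_re_le_norm (z₁ - z₂)
    simpa [Complex.sub_re] using this
  calc ‖rlcPsi d z₁ - rlcPsi d z₂‖
      ≤ ‖z₁ - z₂‖ + ‖((max 0 (z₁.re - d) - max 0 (z₂.re - d) : ℝ) : ℂ)‖ := by
        rw [h1]; exact norm_sub_le _ _
    _ ≤ 2 * ‖z₁ - z₂‖ := by
        rw [Complex.norm_real]
        have : ‖max 0 (z₁.re - d) - max 0 (z₂.re - d)‖ ≤ ‖z₁ - z₂‖ :=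
          le_trans h2 h3
        linarith

lemma rlc_exp_lip {c : ℝ} {z₁ z₂ : ℂ} (h1 : z₁.re ≤ c) (h2 : z₂.re ≤ c) :
    ‖Complex.exp z₁ - Complex.exp z₂‖ ≤ Real.exp c * ‖z₁ - z₂‖ := by
  have := Convex.norm_image_sub_le_of_norm_deriv_le (f := Complex.exp)
    (s := {z : ℂ | z.re ≤ c})
    (fun x _ => Complex.differentiable_exp.differentiableAt)
    (fun x hx => by
      rw [Complex.deriv_exp]
      have : ‖Complex.exp x‖ = Real.exp x.re := by
        simp [Complex.norm_exp]
      rw [this]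
      exact Real.exp_le_exp.2 hx)
    (convex_halfSpace_re_le c) h2 h1
  simpa using this

lemma rlc_R_lip {ρ r r' M : ℝ} (hr' : r' < r) {R : ℂ × ℂ → ℂ}
    (hRhol : DifferentiableOn ℂ R {p : ℂ × ℂ | ‖p.1‖ < ρ ∧ ‖p.2‖ < r})
    (hM : ∀ p : ℂ × ℂ, ‖p.1‖ < ρ → ‖p.2‖ < r → ‖R p‖ ≤ M)
    {x : ℂ} (hx : ‖x‖ < ρ) {y₁ y₂ : ℂ}
    (hy₁ : ‖y₁‖ ≤ r') (hy₂ : ‖y₂‖ ≤ r') :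
    ‖R (x, y₁) - R (x, y₂)‖ ≤ (2*M+1)/(r - r') * ‖y₁ - y₂‖ := by
  set g : ℂ → ℂ := fun y => R (x, y) with hg
  have hgd : DifferentiableOn ℂ g (ball (0:ℂ) r) := by
    apply hRhol.comp (((differentiable_const x).prodMk differentiable_id).differentiableOn)
    intro y hy
    exact ⟨hx, by simpa using mem_ball_zero_iff.1 hy⟩
  have hdiffAt : ∀ y ∈ closedBall (0:ℂ) r', DifferentiableAt ℂ g y := by
    intro y hy
    refine hgd.differentiableAt (isOpen_ball.mem_nhds ?_)
    rw [mem_ball_zero_iff]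
    exact lt_of_le_of_lt (mem_closedBall_zero_iff.1 hy) hr'
  have hbound : ∀ y ∈ closedBall (0:ℂ) r', ‖deriv g y‖ ≤ (2*M+1)/(r - r') := by
    intro y hy
    have hy' : ‖y‖ ≤ r' := mem_closedBall_zero_iff.1 hy
    have hsub : ball y (r - r') ⊆ ball (0:ℂ) r := by
      intro z hz
      rw [mem_ball_zero_iff]
      calc ‖z‖ = ‖(z - y) + y‖ := by ring_nf
        _ ≤ ‖z - y‖ + ‖y‖ := norm_add_le _ _
        _ < (r - r') + r' := by
            have := mem_ball_iff_norm.1 hz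
            linarith
        _ = r := by ring
    refine Complex.norm_deriv_le_div_of_mapsTo_ball (hgd.mono hsub) ?_ (by linarith)
    intro z hz
    have hzr : ‖z‖ < r := by
      simpa using mem_ball_zero_iff.1 (hsub hz)
    have hyr : ‖y‖ < r := by
      simpa using lt_of_le_of_lt hy' hr'
    have h1 : ‖g z‖ ≤ M := hM (x, z) hx hzr
    have h2 : ‖g y‖ ≤ M := hM (x, y) hx hyr
    rw [mem_closedBall, dist_eq_norm]
    calc ‖g z - g y‖ ≤ ‖g z‖ + ‖g y‖ := norm_sub_le _ _
      _ ≤ M + M := by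
          exact add_le_add h1 h2
      _ ≤ 2*M + 1 := by linarith
  have := Convex.norm_image_sub_le_of_norm_deriv_le hdiffAt hbound
    (convex_closedBall (0:ℂ) r')
    (mem_closedBall_zero_iff.2 (by simpa using hy₂))
    (mem_closedBall_zero_iff.2 (by simpa using hy₁))
  simpa using this

lemma rlcPsi_continuous (d : ℝ) : Continuous (rlcPsi d) := by
  unfold rlcPsi
  exact continuous_id.sub (Complex.continuous_ofReal.comp
    (continuous_const.max (Complex.continuous_re.sub continuous_const)))



/-- Outgoing rays of a stability beam lift completely inside the domain: for `R`
holomorphic on the polydisc with `|R(x,y)| ≤ N_R|x|^a`, `cos δ > N_R ρ^a`, and a ray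
`t ↦ z₀ + tθ` of direction `θ = ϑ exp(iβ)`, `ϑ = −λ/|λ|`, `|β| ≤ δ`, staying in
`{Re z < log ρ}`, there is a lift `w` with `w(0) = w₀`, solving the tangency ODE,
whose real part is strictly decreasing; in particular `Re (w t) < log r` throughout. -/
theorem ray_lifts_completely
    (lam : ℂ) (hlam : lam ≠ 0)
    (a : ℕ) (ha : 0 < a)
    (ρ r : ℝ) (hρ : 0 < ρ) (hr : 0 < r)
    (NR : ℝ) (hNR : 0 ≤ NR)
    (δ : ℝ) (hδ0 : 0 < δ) (hδπ : δ < Real.pi / 2)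
    (hcos : NR * ρ ^ a < Real.cos δ)
    (R : ℂ × ℂ → ℂ)
    (hRhol : DifferentiableOn ℂ R
      {p : ℂ × ℂ | ‖p.1‖ < ρ ∧ ‖p.2‖ < r})
    (hRbound : ∀ p : ℂ × ℂ, ‖p.1‖ < ρ → ‖p.2‖ < r →
      ‖R p‖ ≤ NR * ‖p.1‖ ^ a)
    (β : ℝ) (hβ : |β| ≤ δ)
    (θ : ℂ) (hθ : θ = -lam / (‖lam‖ : ℂ) * Complex.exp (β * Complex.I))
    (z₀ w₀ : ℂ) (hz₀ : z₀.re < Real.log ρ) (hw₀ : w₀.re < Real.log r)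
    (T : ℝ) (hT : 0 < T)
    (hray : ∀ t ∈ Set.Icc (0:ℝ) T, (z₀ + (t:ℂ) * θ).re < Real.log ρ) :
    ∃ w : ℝ → ℂ, w 0 = w₀
      ∧ (∀ t ∈ Set.Icc (0:ℝ) T,
          HasDerivAt w
            (θ / lam * (1 + R (Complex.exp (z₀ + (t:ℂ) * θ), Complex.exp (w t)))) t)
      ∧ StrictAntiOn (fun t => (w t).re) (Set.Icc (0:ℝ) T)
      ∧ ∀ t ∈ Set.Icc (0:ℝ) T, (w t).re < Real.log r := by
  have hΛ : (0:ℝ) < ‖lam‖ := norm_pos_iff.mpr hlam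
  -- maximum of the ray's real part on [0, T]
  obtain ⟨t₁, ht₁, hmax⟩ := (isCompact_Icc (a := (0:ℝ)) (b := T)).exists_isMaxOn
    (Set.nonempty_Icc.2 (by linarith))
    (Continuous.continuousOn (Complex.continuous_re.comp (continuous_const.add (Complex.continuous_ofReal.mul continuous_const))))
  set m : ℝ := (z₀ + (t₁:ℂ) * θ).re with hmdef
  have hm : ∀ t ∈ Set.Icc (0:ℝ) T, (z₀ + (t:ℂ) * θ).re ≤ m := fun t ht => hmax ht
  have hmρ : m < Real.log ρ := hray t₁ ht₁
  set c : ℝ := (w₀.re + Real.log r) / 2 with hcdef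
  have hw₀c : w₀.re < c := by rw [hcdef]; linarith
  have hclog : c < Real.log r := by rw [hcdef]; linarith
  have hρ' : Real.exp m < ρ := by
    calc Real.exp m < Real.exp (Real.log ρ) := Real.exp_lt_exp.2 hmρ
      _ = ρ := Real.exp_log hρ
  have hr' : Real.exp c < r := by
    calc Real.exp c < Real.exp (Real.log r) := Real.exp_lt_exp.2 hclog
      _ = r := Real.exp_log hr
  set M : ℝ := NR * ρ ^ a with hMdef
  have hM0 : 0 ≤ M := mul_nonneg hNR (by positivity)
  -- clamped coordinates
  set X : ℝ → ℂ := fun t => Complex.exp (rlcPsi m (z₀ + (t:ℂ) * θ)) with hXdef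
  set Y : ℂ → ℂ := fun w => Complex.exp (rlcPsi c w) with hYdef
  have hXle : ∀ t, ‖X t‖ ≤ Real.exp m := by
    intro t
    simp only [hXdef, Complex.norm_exp]
    exact Real.exp_le_exp.2 (rlcPsi_re_le m _)
  have hXlt : ∀ t, ‖X t‖ < ρ := fun t => lt_of_le_of_lt (hXle t) hρ'
  have hYle : ∀ w, ‖Y w‖ ≤ Real.exp c := by
    intro w
    simp only [hYdef, Complex.norm_exp]
    exact Real.exp_le_exp.2 (rlcPsi_re_le c _)
  have hYlt : ∀ w, ‖Y w‖ < r := fun w => lt_of_le_of_lt (hYle w) hr'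
  have hRM : ∀ p : ℂ × ℂ, ‖p.1‖ < ρ → ‖p.2‖ < r →
      ‖R p‖ ≤ M := by
    intro p h1 h2
    refine (hRbound p h1 h2).trans ?_
    rw [hMdef]
    exact mul_le_mul_of_nonneg_left (pow_le_pow_left₀ (norm_nonneg _) h1.le a) hNR
  set f : ℝ → ℂ → ℂ := fun t w => θ / lam * (1 + R (X t, Y w)) with hfdef
  -- basic facts about θ
  have habse : ‖Complex.exp ((β:ℂ) * Complex.I)‖ = 1 := by
    rw [Complex.norm_exp]
    simp [Complex.mul_re]
  have habsθ : ‖θ‖ = 1 := by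
    rw [hθ, norm_mul, norm_div, norm_neg, Complex.norm_real, norm_norm,
      div_self hΛ.ne', habse, one_mul]
  have hθlam : θ / lam = -(Complex.exp ((β:ℂ) * Complex.I)) * ((‖lam‖ : ℂ))⁻¹ := by
    rw [hθ]
    have h1 : ((‖lam‖ : ℝ) : ℂ) ≠ 0 := Complex.ofReal_ne_zero.2 hΛ.ne'
    field_simp
  -- norm bound for f
  set Cb : ℝ := (1 + M) / ‖lam‖ with hCbdef
  have hCb0 : 0 ≤ Cb := div_nonneg (by linarith) hΛ.le
  have hfnorm : ∀ t w, ‖f t w‖ ≤ Cb := by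
    intro t w
    have hRp := hRM (X t, Y w) (hXlt t) (hYlt w)
    simp only [hfdef]
    rw [norm_mul, norm_div, habsθ]
    have h1 : ‖1 + R (X t, Y w)‖ ≤ 1 + M := by
      calc ‖1 + R (X t, Y w)‖
          ≤ ‖(1:ℂ)‖ + ‖R (X t, Y w)‖ := norm_add_le _ _
        _ ≤ 1 + M := by rw [norm_one]; linarith
    rw [hCbdef]
    calc 1 / ‖lam‖ * ‖(1 + R (X t, Y w) : ℂ)‖
        ≤ 1 / ‖lam‖ * (1 + M) := by
          refine mul_le_mul_of_nonneg_left ?_ (by positivity)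
          exact h1
      _ = (1 + M) / ‖lam‖ := by ring
  -- real-part bound for f
  have hε : 0 < (Real.cos δ - M) / ‖lam‖ := by
    refine div_pos ?_ hΛ
    rw [hMdef]; linarith
  have hfre : ∀ t w, (f t w).re ≤ -((Real.cos δ - M) / ‖lam‖) := by
    intro t w
    have hRp := hRM (X t, Y w) (hXlt t) (hYlt w)
    have hrw : f t w = ((-(‖lam‖)⁻¹ : ℝ) : ℂ)
        * (Complex.exp ((β:ℂ) * Complex.I) * (1 + R (X t, Y w))) := by
      simp only [hfdef]
      rw [hθlam]
      push_cast
      ring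
    rw [hrw, Complex.re_ofReal_mul]
    have hre : Real.cos δ - M
        ≤ (Complex.exp ((β:ℂ) * Complex.I) * (1 + R (X t, Y w))).re := by
      have hsplit : Complex.exp ((β:ℂ) * Complex.I) * (1 + R (X t, Y w))
          = Complex.exp ((β:ℂ) * Complex.I)
            + Complex.exp ((β:ℂ) * Complex.I) * R (X t, Y w) := by ring
      rw [hsplit, Complex.add_re, Complex.exp_ofReal_mul_I_re]
      have h1 : Real.cos δ ≤ Real.cos β := by
        rw [← Real.cos_abs β]
        exact Real.cos_le_cos_of_nonneg_of_le_pi (abs_nonneg β)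
          (by linarith [Real.pi_pos]) hβ
      have habs2 : ‖Complex.exp ((β:ℂ) * Complex.I) * R (X t, Y w)‖ ≤ M := by
        rw [norm_mul, habse, one_mul]; exact hRp
      have h2 : -M ≤ (Complex.exp ((β:ℂ) * Complex.I) * R (X t, Y w)).re := by
        have := Complex.abs_re_le_norm (Complex.exp ((β:ℂ) * Complex.I) * R (X t, Y w))
        have h3 := (abs_le.1 this).1
        linarith
      linarith
    have hΛi : (0:ℝ) < (‖lam‖)⁻¹ := inv_pos.2 hΛ
    have h4 := mul_le_mul_of_nonneg_left hre hΛi.le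
    have h5 : -((Real.cos δ - M) / ‖lam‖)
        = -((‖lam‖)⁻¹ * (Real.cos δ - M)) := by ring
    rw [h5]
    nlinarith [h4]
  -- Lipschitz bound for f
  set LR : ℝ := (2 * M + 1) / (r - Real.exp c) with hLRdef
  have hLR0 : 0 ≤ LR := by
    rw [hLRdef]
    exact div_nonneg (by linarith) (by linarith)
  set Lf : ℝ := (‖lam‖)⁻¹ * (LR * (Real.exp c * 2)) with hLfdef
  have hLf0 : 0 ≤ Lf := by
    rw [hLfdef]
    have := Real.exp_nonneg c
    positivity
  have hflip : ∀ t (w₁ w₂ : ℂ), dist (f t w₁) (f t w₂) ≤ Lf * dist w₁ w₂ := by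
    intro t w₁ w₂
    have hRl := rlc_R_lip hr' hRhol hRM (hXlt t) (hYle w₁) (hYle w₂)
    have hexp : ‖Y w₁ - Y w₂‖ ≤ Real.exp c * ‖rlcPsi c w₁ - rlcPsi c w₂‖ :=
      rlc_exp_lip (rlcPsi_re_le c w₁) (rlcPsi_re_le c w₂)
    have hpsi := rlcPsi_lip c w₁ w₂
    have hdiff : f t w₁ - f t w₂ = θ / lam * (R (X t, Y w₁) - R (X t, Y w₂)) := by
      simp only [hfdef]; ring
    rw [dist_eq_norm, dist_eq_norm, hdiff, norm_mul]
    have hnθ : ‖θ / lam‖ = (‖lam‖)⁻¹ := by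
      rw [norm_div, habsθ, one_div]
    rw [hnθ]
    have hΛi : (0:ℝ) ≤ (‖lam‖)⁻¹ := (inv_pos.2 hΛ).le
    calc (‖lam‖)⁻¹ * ‖R (X t, Y w₁) - R (X t, Y w₂)‖
        ≤ (‖lam‖)⁻¹ * (LR * ‖Y w₁ - Y w₂‖) :=
          mul_le_mul_of_nonneg_left (by rw [hLRdef]; exact hRl) hΛi
      _ ≤ (‖lam‖)⁻¹ * (LR * (Real.exp c * (2 * ‖w₁ - w₂‖))) := by
          refine mul_le_mul_of_nonneg_left ?_ hΛi
          refine mul_le_mul_of_nonneg_left ?_ hLR0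
          calc ‖Y w₁ - Y w₂‖ ≤ Real.exp c * ‖rlcPsi c w₁ - rlcPsi c w₂‖ := hexp
            _ ≤ Real.exp c * (2 * ‖w₁ - w₂‖) :=
                mul_le_mul_of_nonneg_left hpsi (Real.exp_nonneg c)
      _ = Lf * ‖w₁ - w₂‖ := by rw [hLfdef]; ring
  -- continuity of f in t
  have hXcont : Continuous X := by
    simp only [hXdef]
    exact Complex.continuous_exp.comp ((rlcPsi_continuous m).comp (continuous_const.add (Complex.continuous_ofReal.mul continuous_const)))
  have hcont : ∀ x ∈ closedBall w₀ (Cb * (T + 1)),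
      ContinuousOn (fun t => f t x) (Set.Icc (-1 : ℝ) (T + 1)) := by
    intro x _
    have hq : Continuous fun t : ℝ => (X t, Y x) := hXcont.prodMk continuous_const
    have hRc : Continuous fun t : ℝ => R (X t, Y x) := by
      rw [← continuousOn_univ]
      exact hRhol.continuousOn.comp hq.continuousOn (fun t _ => ⟨hXlt t, hYlt x⟩)
    simp only [hfdef]
    exact (continuous_const.mul (continuous_const.add hRc)).continuousOn
  -- Picard-Lindelöf
  have hCT : 0 ≤ Cb * (T + 1) := mul_nonneg hCb0 (by linarith)
  have hpl : IsPicardLindelof f (⟨0, by constructor <;> linarith⟩ : Icc (-1:ℝ) (T + 1)) w₀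
      (Real.toNNReal (Cb * (T + 1))) 0 (Real.toNNReal Cb) (Real.toNNReal Lf) :=
    { lipschitzOnWith := fun t _ => LipschitzOnWith.of_dist_le_mul (fun w₁ _ w₂ _ => by
        rw [Real.coe_toNNReal _ hLf0]; exact hflip t w₁ w₂)
      continuousOn := fun x hx => hcont x (by rwa [Real.coe_toNNReal _ hCT] at hx)
      norm_le := fun t _ x _ => by rw [Real.coe_toNNReal _ hCb0]; exact hfnorm t x
      mul_max_le := by
        have e1 := Real.coe_toNNReal _ hCb0
        have e2 := Real.coe_toNNReal _ hCT
        show (Real.toNNReal Cb : ℝ) * max (T + 1 - 0) (0 - (-1))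
          ≤ (Real.toNNReal (Cb * (T + 1)) : ℝ) - ((0 : NNReal) : ℝ)
        have h1 : (T + 1 - 0 : ℝ) = T + 1 := by ring
        have h2 : (0 - (-1) : ℝ) = 1 := by ring
        rw [e1, e2, h1, h2, NNReal.coe_zero, sub_zero, max_eq_left (by linarith : (1:ℝ) ≤ T + 1)] }
  obtain ⟨w, hw0', hwd⟩ := hpl.exists_eq_forall_mem_Icc_hasDerivWithinAt₀
  have hw0 : w 0 = w₀ := hw0'
  have hdAt : ∀ t ∈ Set.Icc (0:ℝ) T, HasDerivAt w (f t (w t)) t := by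
    intro t ht
    refine (hwd t ⟨by linarith [ht.1], by linarith [ht.2]⟩).hasDerivAt ?_
    exact Icc_mem_nhds (by linarith [ht.1]) (by linarith [ht.2])
  have hdre : ∀ t ∈ Set.Icc (0:ℝ) T,
      HasDerivAt (fun s => (w s).re) ((f t (w t)).re) t := by
    intro t ht
    have := (Complex.reCLM.hasFDerivAt (x := w t)).comp_hasDerivAt t (hdAt t ht)
    simp at this; exact this
  have hanti : StrictAntiOn (fun s => (w s).re) (Set.Icc (0:ℝ) T) := by
    apply strictAntiOn_of_deriv_neg (convex_Icc 0 T)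
    · intro t ht
      exact ((hdre t ht).continuousAt).continuousWithinAt
    · intro t ht
      rw [interior_Icc] at ht
      rw [(hdre t (Set.Ioo_subset_Icc_self ht)).deriv]
      calc (f t (w t)).re ≤ -((Real.cos δ - M) / ‖lam‖) := hfre t (w t)
        _ < 0 := neg_lt_zero.2 hε
  have hwc : ∀ t ∈ Set.Icc (0:ℝ) T, (w t).re < c := by
    intro t ht
    rcases eq_or_lt_of_le ht.1 with h0 | h0
    · rw [← h0, hw0]; exact hw₀c
    · have h1 := hanti (Set.left_mem_Icc.2 (by linarith)) ht h0
      simp only [hw0] at h1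
      exact lt_trans h1 hw₀c
  refine ⟨w, hw0, ?_, hanti, ?_⟩
  · intro t ht
    have heq : f t (w t)
        = θ / lam * (1 + R (Complex.exp (z₀ + (t:ℂ) * θ), Complex.exp (w t))) := by
      simp only [hfdef, hXdef, hYdef]
      rw [rlcPsi_eq m (hm t ht), rlcPsi_eq c (hwc t ht).le]
    rw [← heq]
    exact hdAt t ht
  · intro t ht
    exact lt_trans (hwc t ht) hclog
end

section
/- Let λ < 0 be a real number and let a be a real number with a + 1/λ ≥ 0 (equivalently a ≥ 1/|λ|). Fix z*, w* ∈ ℂ and define T_{n,m}(z) := exp(m·w* + n·z)·( exp((n + m/λ)(z* − z)) − 1 )/(n + m/λ) when c := n + m/λ ≠ 0. Then for all integers n ≥ a and m ≥ 1 with c = n + m/λ ≠ 0, and all z ∈ ℂ with Re z ≤ 0: |T_{n,m}(z)| ≤ (2/|c|)·exp(m·Re w*)·exp(|c|·|Re z*|)·exp(Re z/|λ|). In particular each individual non-resonant characteristic T_{n,m}(z) is O(|exp(−z/λ)|) as Re z → −∞. -/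
/-- Bound on an individual non-resonant characteristic: for `λ < 0` real,
`a + 1/λ ≥ 0`, `n ≥ a`, `m ≥ 1` and `c = n + m/λ ≠ 0`, the characteristic
`T_{n,m}(z) = exp(m w* + n z)(exp(c(z* − z)) − 1)/c` satisfies, for `Re z ≤ 0`,
`|T_{n,m}(z)| ≤ (2/|c|)·exp(m Re w*)·exp(|c||Re z*|)·exp(Re z/|λ|)`,
i.e. it is `O(|exp(−z/λ)|)`. -/
theorem nonresonant_characteristic_bound
    (lam : ℝ) (hlam : lam < 0)
    (a : ℝ) (ha : 0 ≤ a + 1 / lam)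
    (zs ws : ℂ) (n m : ℕ) (hn : a ≤ (n : ℝ)) (hm : 1 ≤ m)
    (c : ℝ) (hc : c = (n : ℝ) + (m : ℝ) / lam) (hc0 : c ≠ 0)
    (z : ℂ) (hz : z.re ≤ 0) :
    ‖Complex.exp ((m : ℂ) * ws + (n : ℂ) * z)
        * (Complex.exp ((c : ℂ) * (zs - z)) - 1) / (c : ℂ)‖
      ≤ 2 / |c| * Real.exp ((m : ℝ) * ws.re) * Real.exp (|c| * |zs.re|)
        * Real.exp (z.re / |lam|) := by
  have hla : |lam| = -lam := abs_of_neg hlam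
  have hlpos : (0:ℝ) < -lam := neg_pos.mpr hlam
  have hcpos : (0:ℝ) < |c| := abs_pos.mpr hc0
  have hm' : (1:ℝ) ≤ (m:ℝ) := by exact_mod_cast hm
  -- n ≥ 1/|lam|
  have hn1 : 1 / |lam| ≤ (n:ℝ) := by
    rw [hla]
    have h1 : 1 / (-lam) = -(1 / lam) := by field_simp [ne_of_lt hlam]
    linarith [hn, ha]
  -- n - c ≥ 1/|lam|
  have hnc : 1 / |lam| ≤ (n:ℝ) - c := by
    rw [hla, hc]
    have h2 : (n:ℝ) - ((n:ℝ) + (m:ℝ) / lam) = (m:ℝ) / (-lam) := by field_simp [ne_of_lt hlam]; ring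
    rw [h2]
    exact (div_le_div_iff_of_pos_right hlpos).mpr hm'
  have key : ‖Complex.exp ((m : ℂ) * ws + (n : ℂ) * z)
        * (Complex.exp ((c : ℂ) * (zs - z)) - 1) / (c : ℂ)‖
      = Real.exp ((m:ℝ) * ws.re + (n:ℝ) * z.re)
        * ‖Complex.exp ((c : ℂ) * (zs - z)) - 1‖ / |c| := by
    rw [norm_div, norm_mul, Complex.norm_real, Real.norm_eq_abs, Complex.norm_exp]
    congr 3
    simp [Complex.add_re, Complex.mul_re]
  rw [key]
  have h2 : ‖Complex.exp ((c : ℂ) * (zs - z)) - 1‖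
      ≤ Real.exp (c * (zs.re - z.re)) + 1 := by
    have h := norm_sub_le (Complex.exp ((c : ℂ) * (zs - z))) 1
    simp only [norm_one] at h
    rw [Complex.norm_exp] at h
    have hre : ((c : ℂ) * (zs - z)).re = c * (zs.re - z.re) := by
      simp [Complex.mul_re]
    rwa [hre] at h
  have main : Real.exp ((m:ℝ) * ws.re + (n:ℝ) * z.re)
        * (Real.exp (c * (zs.re - z.re)) + 1)
      ≤ 2 * Real.exp ((m:ℝ) * ws.re) * Real.exp (|c| * |zs.re|)
        * Real.exp (z.re / |lam|) := by
    have hu1 : (1:ℝ) ≤ Real.exp (|c| * |zs.re|) :=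
      Real.one_le_exp (by positivity)
    have hA : Real.exp ((n:ℝ) * z.re) * Real.exp (c * (zs.re - z.re))
        ≤ Real.exp (|c| * |zs.re|) * Real.exp (z.re / |lam|) := by
      rw [← Real.exp_add, ← Real.exp_add]
      apply Real.exp_le_exp.mpr
      have hcz : c * zs.re ≤ |c| * |zs.re| := by
        calc c * zs.re ≤ |c * zs.re| := le_abs_self _
        _ = |c| * |zs.re| := abs_mul _ _
      have hmz : ((n:ℝ) - c) * z.re ≤ (1 / |lam|) * z.re :=
        mul_le_mul_of_nonpos_right hnc hz
      have heq : (1 / |lam|) * z.re = z.re / |lam| := by ring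
      nlinarith [hmz, hcz, heq]
    have hB : Real.exp ((n:ℝ) * z.re) ≤ Real.exp (z.re / |lam|) := by
      apply Real.exp_le_exp.mpr
      have hmz : (n:ℝ) * z.re ≤ (1 / |lam|) * z.re :=
        mul_le_mul_of_nonpos_right hn1 hz
      have heq : (1 / |lam|) * z.re = z.re / |lam| := by ring
      linarith [hmz, heq]
    have hP : (0:ℝ) < Real.exp ((m:ℝ) * ws.re) := Real.exp_pos _
    have hv : (0:ℝ) < Real.exp (z.re / |lam|) := Real.exp_pos _
    have hexp : Real.exp ((m:ℝ) * ws.re + (n:ℝ) * z.re)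
        = Real.exp ((m:ℝ) * ws.re) * Real.exp ((n:ℝ) * z.re) := Real.exp_add _ _
    rw [hexp]
    have s1 := mul_le_mul_of_nonneg_left (add_le_add hA hB) hP.le
    have s2 := mul_le_mul_of_nonneg_left
      (le_mul_of_one_le_left hv.le hu1) hP.le
    nlinarith [s1, s2, hP, hv, Real.exp_pos ((n:ℝ) * z.re)]
  calc Real.exp ((m:ℝ) * ws.re + (n:ℝ) * z.re)
        * ‖Complex.exp ((c : ℂ) * (zs - z)) - 1‖ / |c|
      ≤ Real.exp ((m:ℝ) * ws.re + (n:ℝ) * z.re)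
        * (Real.exp (c * (zs.re - z.re)) + 1) / |c| := by
        gcongr
    _ ≤ 2 * Real.exp ((m:ℝ) * ws.re) * Real.exp (|c| * |zs.re|)
        * Real.exp (z.re / |lam|) / |c| := by gcongr
    _ = 2 / |c| * Real.exp ((m:ℝ) * ws.re) * Real.exp (|c| * |zs.re|)
        * Real.exp (z.re / |lam|) := by ring
end

section
/- Let ρ > 0, let N be a positive integer, and let g be holomorphic on an open disc {x ∈ ℂ : |x| < ρ''} with ρ'' > ρ; set C := sup_{0 < |x| ≤ ρ} |g(x) − g(0)|/|x| (which is finite). Then for all z, z* ∈ ℂ with Re z* ≤ log ρ, Re(z* − z) ≥ 1 and |Im(z* − z)| ≤ πN, one has | ∫₀¹ g( exp( z + t(z* − z) ) )·(z* − z) dt − g(0)·(z* − z) | ≤ C·exp(Re z*)·√(1 + π²N²). (This is the regular-part estimate: the characteristic of the regular part G₀ along the model leaf equals G₀(0)(z* − z) + O(exp z) as Re z → −∞ with bounded imaginary part.) -/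
/-- Regular-part estimate: for `g` holomorphic on a disc of radius `ρ'' > ρ` and
`C := sup_{0<|x|≤ρ} |g(x) − g(0)|/|x|`, the characteristic of `g` along the model
leaf over the segment from `z` to `z*` equals `g(0)(z* − z) + O(exp z)`:
if `Re z* ≤ log ρ`, `Re(z* − z) ≥ 1` and `|Im(z* − z)| ≤ πN`, then
`|∫₀¹ g(exp(z + t(z*−z)))(z*−z) dt − g(0)(z*−z)| ≤ C·exp(Re z*)·√(1 + π²N²)`. -/
theorem regular_part_estimate
    (ρ : ℝ) (hρ : 0 < ρ)
    (N : ℕ) (hN : 0 < N)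
    (ρ'' : ℝ) (hρ'' : ρ < ρ'')
    (g : ℂ → ℂ) (hg : DifferentiableOn ℂ g {x : ℂ | ‖x‖ < ρ''})
    (C : ℝ)
    (hC : C = sSup {c : ℝ | ∃ x : ℂ, 0 < ‖x‖ ∧ ‖x‖ ≤ ρ ∧
      c = ‖g x - g 0‖ / ‖x‖}) :
    ∀ z zs : ℂ, zs.re ≤ Real.log ρ → 1 ≤ (zs - z).re →
      |(zs - z).im| ≤ Real.pi * N →
      ‖(∫ t in (0:ℝ)..1, g (Complex.exp (z + (t:ℂ) * (zs - z))) * (zs - z))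
            - g 0 * (zs - z)‖
        ≤ C * Real.exp zs.re * Real.sqrt (1 + Real.pi ^ 2 * (N : ℝ) ^ 2) := by
  have hsball : {x : ℂ | ‖x‖ < ρ''} = Metric.ball 0 ρ'' := by
    ext x; simp [Metric.mem_ball, Complex.dist_eq]
  rw [hsball] at hg
  set ρ' : ℝ := (ρ + ρ'') / 2 with hρ'def
  have hρρ' : ρ < ρ' := by simp only [hρ'def]; linarith
  have hρ'ρ'' : ρ' < ρ'' := by simp only [hρ'def]; linarith
  have hsub : Metric.closedBall (0:ℂ) ρ' ⊆ Metric.ball 0 ρ'' :=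
    Metric.closedBall_subset_ball hρ'ρ''
  have hA : AnalyticOnNhd ℂ g (Metric.ball 0 ρ'') :=
    hg.analyticOnNhd Metric.isOpen_ball
  have hfd : ContinuousOn (fun x => fderiv ℂ g x) (Metric.ball (0:ℂ) ρ'') :=
    (hA.fderiv).continuousOn
  obtain ⟨M, hM⟩ := (isCompact_closedBall (0:ℂ) ρ').exists_bound_of_continuousOn
    (hfd.mono hsub)
  have hlip : ∀ x : ℂ, ‖x‖ ≤ ρ' → ‖g x - g 0‖ ≤ M * ‖x‖ := by
    intro x hx
    have h0 : (0:ℂ) ∈ Metric.closedBall (0:ℂ) ρ' := by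
      simp [Metric.mem_closedBall]; linarith
    have hxmem : x ∈ Metric.closedBall (0:ℂ) ρ' := by
      simpa [Metric.mem_closedBall, Complex.dist_eq] using hx
    have := (convex_closedBall (0:ℂ) ρ').norm_image_sub_le_of_norm_fderiv_le
      (f := g) (C := M)
      (fun y hy => hg.differentiableAt (Metric.isOpen_ball.mem_nhds (hsub hy)))
      hM h0 hxmem
    simpa using this
  set S : Set ℝ := {c : ℝ | ∃ x : ℂ, 0 < ‖x‖ ∧ ‖x‖ ≤ ρ ∧
      c = ‖g x - g 0‖ / ‖x‖} with hS
  have hbdd : BddAbove S := by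
    refine ⟨M, fun c hc => ?_⟩
    obtain ⟨x, hx0, hxρ, rfl⟩ := hc
    rw [div_le_iff₀ hx0]
    exact hlip x (hxρ.trans hρρ'.le)
  have hCkey : ∀ x : ℂ, 0 < ‖x‖ → ‖x‖ ≤ ρ →
      ‖g x - g 0‖ ≤ C * ‖x‖ := by
    intro x hx0 hxρ
    have hmem : ‖g x - g 0‖ / ‖x‖ ∈ S := ⟨x, hx0, hxρ, rfl⟩
    have h2 := le_csSup hbdd hmem
    rw [← hC] at h2
    rw [div_le_iff₀ hx0] at h2
    linarith
  have hC0 : 0 ≤ C := by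
    have hmem : ‖g (ρ:ℂ) - g 0‖ / ‖(ρ:ℂ)‖ ∈ S := by
      refine ⟨(ρ:ℂ), ?_, ?_, rfl⟩ <;>
        simp [Complex.norm_real, Real.norm_eq_abs, abs_of_pos hρ, hρ, le_refl]
    have h2 := le_csSup hbdd hmem
    rw [← hC] at h2
    exact le_trans (div_nonneg (norm_nonneg _) (norm_nonneg _)) h2
  intro z zs hzs hre him
  set w : ℂ := zs - z with hw
  have hwre : (1:ℝ) ≤ w.re := hre
  have hwre0 : (0:ℝ) < w.re := by linarith
  have hzsre : zs.re = z.re + w.re := by simp [hw]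
  have hexp_re : ∀ t : ℝ,
      ‖Complex.exp (z + (t:ℂ) * w)‖ = Real.exp (z.re + t * w.re) := by
    intro t
    rw [Complex.norm_exp]
    congr 1
    simp [Complex.add_re, Complex.mul_re]
  have hre_le : ∀ t : ℝ, t ∈ Set.Icc (0:ℝ) 1 → z.re + t * w.re ≤ zs.re := by
    intro t ht
    have : t * w.re ≤ w.re := by nlinarith [ht.1, ht.2]
    linarith [hzsre]
  have hexp_lt : ∀ t : ℝ, t ∈ Set.Icc (0:ℝ) 1 →
      ‖Complex.exp (z + (t:ℂ) * w)‖ ≤ ρ := by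
    intro t ht
    rw [hexp_re t]
    calc Real.exp (z.re + t * w.re) ≤ Real.exp zs.re := Real.exp_le_exp.2 (hre_le t ht)
    _ ≤ Real.exp (Real.log ρ) := Real.exp_le_exp.2 hzs
    _ = ρ := Real.exp_log hρ
  have hcont : ContinuousOn (fun t : ℝ => g (Complex.exp (z + (t:ℂ) * w)) * w)
      (Set.uIcc (0:ℝ) 1) := by
    rw [Set.uIcc_of_le (by norm_num : (0:ℝ) ≤ 1)]
    apply ContinuousOn.mul _ continuousOn_const
    apply hg.continuousOn.comp
    · exact (Complex.continuous_exp.comp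
        (continuous_const.add (Complex.continuous_ofReal.mul continuous_const))).continuousOn
    · intro t ht
      simp only [Metric.mem_ball, Complex.dist_eq, sub_zero]
      exact lt_of_le_of_lt (hexp_lt t ht) hρ''
  have hint : IntervalIntegrable (fun t : ℝ => g (Complex.exp (z + (t:ℂ) * w)) * w)
      MeasureTheory.volume 0 1 := hcont.intervalIntegrable
  have heq : (∫ t in (0:ℝ)..1, (g (Complex.exp (z + (t:ℂ) * w)) - g 0) * w)
      = (∫ t in (0:ℝ)..1, g (Complex.exp (z + (t:ℂ) * w)) * w) - g 0 * w := by
    simp_rw [sub_mul]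
    rw [intervalIntegral.integral_sub hint intervalIntegrable_const,
      intervalIntegral.integral_const]
    simp
  rw [← heq]
  -- bound function
  have hderiv : ∀ t ∈ Set.uIcc (0:ℝ) 1,
      HasDerivAt (fun t : ℝ => Real.exp (z.re + t * w.re) / w.re)
        (Real.exp (z.re + t * w.re)) t := by
    intro t _
    have h1 : HasDerivAt (fun t : ℝ => z.re + t * w.re) w.re t := by
      simpa using ((hasDerivAt_id t).mul_const w.re).const_add z.re
    have h3 := h1.exp.div_const w.re
    simpa [mul_div_assoc, div_self (ne_of_gt hwre0)] using h3
  have hcexp : Continuous (fun t : ℝ => Real.exp (z.re + t * w.re)) :=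
    Real.continuous_exp.comp (continuous_const.add (continuous_id.mul continuous_const))
  have hbint : IntervalIntegrable (fun t : ℝ => Real.exp (z.re + t * w.re))
      MeasureTheory.volume 0 1 := hcexp.intervalIntegrable 0 1
  have hival : (∫ t in (0:ℝ)..1, Real.exp (z.re + t * w.re))
      = (Real.exp zs.re - Real.exp z.re) / w.re := by
    rw [intervalIntegral.integral_eq_sub_of_hasDerivAt hderiv hbint]
    rw [hzsre]
    ring_nf
  have hnormle : ‖∫ t in (0:ℝ)..1, (g (Complex.exp (z + (t:ℂ) * w)) - g 0) * w‖
      ≤ |∫ t in (0:ℝ)..1, C * ‖w‖ * Real.exp (z.re + t * w.re)| := by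
    apply intervalIntegral.norm_integral_le_abs_of_norm_le
    · refine (MeasureTheory.ae_restrict_iff' measurableSet_uIoc).2 (.of_forall fun t ht => ?_)
      have ht' : t ∈ Set.Icc (0:ℝ) 1 := by
        rw [Set.uIoc_of_le (by norm_num : (0:ℝ) ≤ 1)] at ht
        exact ⟨ht.1.le, ht.2⟩
      have hx0 : 0 < ‖Complex.exp (z + (t:ℂ) * w)‖ := by
        rw [hexp_re t]; exact Real.exp_pos _
      have hb := hCkey _ hx0 (hexp_lt t ht')
      rw [hexp_re t] at hb
      rw [norm_mul]
      calc ‖g (Complex.exp (z + (t:ℂ) * w)) - g 0‖ * ‖w‖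
          ≤ C * Real.exp (z.re + t * w.re) * ‖w‖ := by
            apply mul_le_mul_of_nonneg_right hb (norm_nonneg _)
        _ = C * ‖w‖ * Real.exp (z.re + t * w.re) := by ring
    · exact (continuous_const.mul hcexp).intervalIntegrable 0 1
  rw [intervalIntegral.integral_const_mul, hival] at hnormle
  have hval_nonneg : 0 ≤ C * ‖w‖ * ((Real.exp zs.re - Real.exp z.re) / w.re) := by
    apply mul_nonneg (mul_nonneg hC0 (norm_nonneg _))
    apply div_nonneg _ hwre0.le
    have : Real.exp z.re ≤ Real.exp zs.re := Real.exp_le_exp.2 (by linarith [hzsre])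
    linarith
  rw [abs_of_nonneg hval_nonneg] at hnormle
  refine hnormle.trans ?_
  -- final numeric estimate
  have hsq : Real.sqrt (1 + Real.pi ^ 2 * (N:ℝ) ^ 2) ≥ 0 := Real.sqrt_nonneg _
  have hnw : ‖w‖ ≤ w.re * Real.sqrt (1 + Real.pi ^ 2 * (N:ℝ) ^ 2) := by
    have him2 : w.im ^ 2 ≤ (Real.pi * N) ^ 2 := by
      have := sq_abs w.im
      nlinarith [abs_nonneg w.im, Real.pi_pos]
    have : w.re * Real.sqrt (1 + Real.pi ^ 2 * (N:ℝ) ^ 2)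
        = Real.sqrt (w.re ^ 2 * (1 + Real.pi ^ 2 * (N:ℝ) ^ 2)) := by
      rw [Real.sqrt_mul (sq_nonneg _), Real.sqrt_sq hwre0.le]
    rw [this, Complex.norm_def, Complex.normSq_apply]
    apply Real.sqrt_le_sqrt
    have h1 : 1 ≤ w.re ^ 2 := by nlinarith
    nlinarith [him2, h1, mul_nonneg (sq_nonneg Real.pi) (sq_nonneg (N:ℝ))]
  have hexple : Real.exp zs.re - Real.exp z.re ≤ Real.exp zs.re := by
    linarith [Real.exp_pos z.re]
  have hzle : Real.exp z.re ≤ Real.exp zs.re := Real.exp_le_exp.2 (by linarith [hzsre])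
  calc C * ‖w‖ * ((Real.exp zs.re - Real.exp z.re) / w.re)
      ≤ C * (w.re * Real.sqrt (1 + Real.pi ^ 2 * (N:ℝ) ^ 2)) * (Real.exp zs.re / w.re) := by
        apply mul_le_mul
        · exact mul_le_mul_of_nonneg_left hnw hC0
        · gcongr
        · apply div_nonneg _ hwre0.le
          linarith
        · exact mul_nonneg hC0 (mul_nonneg hwre0.le hsq)
    _ = C * Real.exp zs.re * Real.sqrt (1 + Real.pi ^ 2 * (N:ℝ) ^ 2) := by
        field_simp
  done
end

section
/- Let λ ∈ ℂ with Im λ ≠ 0, let a be a positive integer with Re(a + 1/λ) ≥ 0, let ρ, r, ε, C > 0, let N be a positive integer, and let z*, w* ∈ ℂ with Re z* ≤ log ρ and Re w* ≤ log r. Let (G_{n,m})_{(n,m) ∈ ℕ²} be complex numbers with |G_{n,m}| ≤ C·(ρ+ε)^{−n}·(r+ε)^{−m} for all n, m. Then there exists M > 0 such that for every z ∈ ℂ satisfying Re z ≤ min(0, log ρ), |Im(z − z*)| ≤ Nπ and Re((z* − z)/λ) ≤ 0, the double series Σ_{n ≥ a, m ≥ 1} G_{n,m}·T_{n,m}(z)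 converges absolutely and | Σ_{n ≥ a, m ≥ 1} G_{n,m}·T_{n,m}(z) | ≤ M·exp(Re(−z/λ)). (For non-real λ the non-regular part of the characteristic along the model leaf is O(|exp(−z/λ)|) as Re z → −∞ with bounded imaginary part.) -/
set_option maxHeartbeats 1000000 in
/-- For non-real `λ` the non-regular part of the characteristic along the model
leaf is `O(|exp(−z/λ)|)`: under Cauchy estimates `|G_{n,m}| ≤ C(ρ+ε)^{−n}(r+ε)^{−m}`
the double series `Σ_{n≥a, m≥1} G_{n,m} T_{n,m}(z)` converges absolutely and is
bounded by `M·exp(Re(−z/λ))` on the half-band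
`{Re z ≤ min(0, log ρ), |Im(z − z*)| ≤ Nπ, Re((z* − z)/λ) ≤ 0}`. -/
theorem nonreal_nonregular_part_estimate
    (lam : ℂ) (hlam : lam.im ≠ 0)
    (a : ℕ) (ha : 0 < a) (haRe : 0 ≤ ((a : ℂ) + 1 / lam).re)
    (ρ r ε C : ℝ) (hρ : 0 < ρ) (hr : 0 < r) (hε : 0 < ε) (hC : 0 < C)
    (N : ℕ) (hN : 0 < N)
    (zs ws : ℂ) (hzs : zs.re ≤ Real.log ρ) (hws : ws.re ≤ Real.log r)
    (G : ℕ → ℕ → ℂ)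
    (hG : ∀ n m : ℕ, ‖G n m‖ ≤ C * (ρ + ε) ^ (-(n : ℤ)) * (r + ε) ^ (-(m : ℤ))) :
    ∃ M : ℝ, 0 < M ∧ ∀ z : ℂ,
      z.re ≤ min 0 (Real.log ρ) → |(z - zs).im| ≤ (N : ℝ) * Real.pi →
      ((zs - z) / lam).re ≤ 0 →
      (Summable (fun nm : ℕ × ℕ => ‖
          (if a ≤ nm.1 ∧ 1 ≤ nm.2 then
            G nm.1 nm.2 *
              (Complex.exp ((nm.2 : ℂ) * ws + (nm.1 : ℂ) * z)
                * (Complex.exp (((nm.1 : ℂ) + (nm.2 : ℂ) / lam) * (zs - z)) - 1)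
                / ((nm.1 : ℂ) + (nm.2 : ℂ) / lam))
          else 0)‖))
      ∧ ‖(∑' nm : ℕ × ℕ,
          (if a ≤ nm.1 ∧ 1 ≤ nm.2 then
            G nm.1 nm.2 *
              (Complex.exp ((nm.2 : ℂ) * ws + (nm.1 : ℂ) * z)
                * (Complex.exp (((nm.1 : ℂ) + (nm.2 : ℂ) / lam) * (zs - z)) - 1)
                / ((nm.1 : ℂ) + (nm.2 : ℂ) / lam))
          else 0))‖
        ≤ M * Real.exp ((-z / lam).re) := by
  have hlam0 : lam ≠ 0 := fun hh => hlam (by simp [hh])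
  have hinv : lam⁻¹.im ≠ 0 := by
    rw [Complex.inv_im]
    exact div_ne_zero (neg_ne_zero.mpr hlam) (Complex.normSq_pos.mpr hlam0).ne'
  set c : ℝ := |lam⁻¹.im| with hcdef
  have hc : 0 < c := abs_pos.mpr hinv
  have hρε : 0 < ρ + ε := by linarith
  have hrε : 0 < r + ε := by linarith
  set qρ : ℝ := ρ / (ρ + ε) with hqρdef
  set qm : ℝ := r / (r + ε) with hqmdef
  have hqρ0 : 0 ≤ qρ := (div_pos hρ hρε).le
  have hqρ1 : qρ < 1 := (div_lt_one hρε).mpr (by linarith)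
  have hqm0 : 0 ≤ qm := (div_pos hr hrε).le
  have hqm1 : qm < 1 := (div_lt_one hrε).mpr (by linarith)
  have hprod : Summable (fun nm : ℕ × ℕ => qρ ^ nm.1 * qm ^ nm.2) :=
    (summable_geometric_of_lt_one hqρ0 hqρ1).mul_of_nonneg
      (summable_geometric_of_lt_one hqm0 hqm1)
      (fun n => pow_nonneg hqρ0 n) (fun n => pow_nonneg hqm0 n)
  set Bc : ℝ := (|zs.im| + N * Real.pi) * c with hBcdef
  set E : ℝ := Real.exp ((zs / lam).re) + (ρ ^ a)⁻¹ * Real.exp Bc with hEdef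
  have hE : 0 < E := by
    have := Real.exp_pos ((zs/lam).re)
    have h2 : 0 < (ρ ^ a)⁻¹ * Real.exp Bc :=
      mul_pos (inv_pos.mpr (pow_pos hρ a)) (Real.exp_pos _)
    rw [hEdef]; linarith
  set D : ℝ := C * E / c with hDdef
  have hD : 0 < D := div_pos (mul_pos hC hE) hc
  set S : ℝ := ∑' nm : ℕ × ℕ, qρ ^ nm.1 * qm ^ nm.2 with hSdef
  have hS0 : 0 ≤ S :=
    tsum_nonneg (fun nm => mul_nonneg (pow_nonneg hqρ0 _) (pow_nonneg hqm0 _))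
  refine ⟨D * S + 1, by positivity, ?_⟩
  intro z hz1 hz2 hz3
  have hzre0 : z.re ≤ 0 := hz1.trans (min_le_left _ _)
  have hzreρ : z.re ≤ Real.log ρ := hz1.trans (min_le_right _ _)
  -- key: a * z.re ≤ Bc + (-z/lam).re
  have hkey : (a : ℝ) * z.re ≤ Bc + (-z / lam).re := by
    have h1 : (-z / lam).re = -(z.re * lam⁻¹.re) + z.im * lam⁻¹.im := by
      rw [div_eq_mul_inv, Complex.mul_re, Complex.neg_re, Complex.neg_im]; ring
    have h2 : 0 ≤ (a : ℝ) + lam⁻¹.re := by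
      simpa [Complex.add_re, one_div] using haRe
    have h3 : z.re * ((a : ℝ) + lam⁻¹.re) ≤ 0 := mul_nonpos_of_nonpos_of_nonneg hzre0 h2
    have h3' : z.re * (a : ℝ) + z.re * lam⁻¹.re ≤ 0 := by nlinarith [h3]
    have him : |z.im| ≤ |zs.im| + N * Real.pi := by
      have h4 : |z.im - zs.im| ≤ (N : ℝ) * Real.pi := by
        simpa [Complex.sub_im] using hz2
      have := abs_sub_abs_le_abs_sub z.im zs.im
      linarith
    have h5 : |z.im * lam⁻¹.im| ≤ Bc := by
      rw [abs_mul, hBcdef]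
      exact mul_le_mul_of_nonneg_right him (abs_nonneg _)
    have h6 : -Bc ≤ z.im * lam⁻¹.im := by
      have := neg_abs_le (z.im * lam⁻¹.im); linarith
    nlinarith [h1, h3', h6]
  -- pointwise bound
  have hbound : ∀ nm : ℕ × ℕ, ‖(if a ≤ nm.1 ∧ 1 ≤ nm.2 then
          G nm.1 nm.2 *
            (Complex.exp ((nm.2 : ℂ) * ws + (nm.1 : ℂ) * z)
              * (Complex.exp (((nm.1 : ℂ) + (nm.2 : ℂ) / lam) * (zs - z)) - 1)
              / ((nm.1 : ℂ) + (nm.2 : ℂ) / lam))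
        else 0 : ℂ)‖
      ≤ D * Real.exp ((-z / lam).re) * (qρ ^ nm.1 * qm ^ nm.2) := by
    rintro ⟨n, m⟩
    dsimp only
    by_cases hcase : a ≤ n ∧ 1 ≤ m
    · obtain ⟨hn, hm⟩ := hcase
      rw [if_pos ⟨hn, hm⟩]
      set μ : ℂ := (n : ℂ) + (m : ℂ) / lam with hμdef
      have hμim : μ.im = m * lam⁻¹.im := by
        rw [hμdef]; simp [div_eq_mul_inv, Complex.add_im, Complex.mul_im]
      have hμabs : c ≤ ‖μ‖ := by
        have h1 : c ≤ |μ.im| := by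
          rw [hμim, abs_mul, Nat.abs_cast]
          calc c = 1 * c := (one_mul c).symm
            _ ≤ (m : ℝ) * c := by
                apply mul_le_mul_of_nonneg_right _ hc.le
                exact_mod_cast hm
        exact h1.trans (Complex.abs_im_le_norm μ)
      have habsrw : ‖G n m *
            (Complex.exp ((m : ℂ) * ws + (n : ℂ) * z)
              * (Complex.exp (μ * (zs - z)) - 1) / μ)‖
          = ‖G n m‖ * (‖Complex.exp ((m : ℂ) * ws + (n : ℂ) * z)‖
              * ‖Complex.exp (μ * (zs - z)) - 1‖) / ‖μ‖ := by
        rw [norm_mul, norm_div, norm_mul]; ring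
      have w1re : ((m : ℂ) * ws + (n : ℂ) * z).re = m * ws.re + n * z.re := by
        simp [Complex.add_re, Complex.mul_re]
      have μsre : (μ * (zs - z)).re = n * (zs - z).re + m * ((zs - z) / lam).re := by
        have hid : μ * (zs - z) = (n : ℂ) * (zs - z) + (m : ℂ) * ((zs - z) / lam) := by
          rw [hμdef]; ring
        rw [hid]; simp [Complex.add_re, Complex.mul_re]
      have hexp_pow : ∀ (x : ℝ) (k : ℕ), 0 < x → Real.exp ((k : ℝ) * Real.log x) = x ^ k := by
        intro x k hx; rw [← Real.log_pow, Real.exp_log (pow_pos hx k)]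
      -- bound A
      have hA : Real.exp (((m : ℂ) * ws + (n : ℂ) * z).re) * Real.exp ((μ * (zs - z)).re)
          ≤ r ^ m * ρ ^ n * (Real.exp ((zs / lam).re) * Real.exp ((-z / lam).re)) := by
        rw [← Real.exp_add, w1re, μsre]
        have hrw : r ^ m * ρ ^ n * (Real.exp ((zs / lam).re) * Real.exp ((-z / lam).re))
            = Real.exp ((m * Real.log r + n * Real.log ρ)
                + ((zs / lam).re + (-z / lam).re)) := by
          rw [Real.exp_add, Real.exp_add, Real.exp_add, hexp_pow r m hr, hexp_pow ρ n hρ]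
        rw [hrw]
        apply Real.exp_le_exp.mpr
        have hws' : (m : ℝ) * ws.re ≤ m * Real.log r :=
          mul_le_mul_of_nonneg_left hws (by positivity)
        have hzs' : (n : ℝ) * zs.re ≤ n * Real.log ρ :=
          mul_le_mul_of_nonneg_left hzs (by positivity)
        have hsub : (n : ℝ) * (zs - z).re = n * zs.re - n * z.re := by
          rw [Complex.sub_re]; ring
        have hXsplit : ((zs - z) / lam).re = (zs / lam).re + (-z / lam).re := by
          rw [show (zs - z) / lam = zs / lam + -z / lam by ring]
          exact Complex.add_re _ _
        have hmle : (m : ℝ) * ((zs - z) / lam).re ≤ 1 * ((zs - z) / lam).re := by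
          apply mul_le_mul_of_nonpos_right _ hz3
          exact_mod_cast hm
        linarith
      -- bound B
      have hB : Real.exp (((m : ℂ) * ws + (n : ℂ) * z).re)
          ≤ r ^ m * ρ ^ n * ((ρ ^ a)⁻¹ * Real.exp Bc * Real.exp ((-z / lam).re)) := by
        rw [w1re]
        have hrw : r ^ m * ρ ^ n * ((ρ ^ a)⁻¹ * Real.exp Bc * Real.exp ((-z / lam).re))
            = Real.exp ((m * Real.log r + n * Real.log ρ)
                + (-(a * Real.log ρ) + (Bc + (-z / lam).re))) := by
          rw [Real.exp_add, Real.exp_add, Real.exp_add, Real.exp_add, Real.exp_neg,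
            hexp_pow r m hr, hexp_pow ρ n hρ, hexp_pow ρ a hρ]
          ring
        rw [hrw]
        apply Real.exp_le_exp.mpr
        have hws' : (m : ℝ) * ws.re ≤ m * Real.log r :=
          mul_le_mul_of_nonneg_left hws (by positivity)
        have hna : ((n : ℝ) - a) * z.re ≤ ((n : ℝ) - a) * Real.log ρ := by
          apply mul_le_mul_of_nonneg_left hzreρ
          have : (a : ℝ) ≤ (n : ℝ) := by exact_mod_cast hn
          linarith
        have hexpand1 : ((n : ℝ) - a) * z.re = n * z.re - a * z.re := by ring
        have hexpand2 : ((n : ℝ) - a) * Real.log ρ = n * Real.log ρ - a * Real.log ρ := by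
          ring
        linarith
      -- numerator bound
      have hnum : ‖Complex.exp ((m : ℂ) * ws + (n : ℂ) * z)‖
            * ‖Complex.exp (μ * (zs - z)) - 1‖
          ≤ r ^ m * ρ ^ n * (E * Real.exp ((-z / lam).re)) := by
        have h21 : ‖Complex.exp (μ * (zs - z)) - 1‖
            ≤ Real.exp ((μ * (zs - z)).re) + 1 := by
          calc ‖Complex.exp (μ * (zs - z)) - 1‖
              ≤ ‖Complex.exp (μ * (zs - z))‖ + 1 := by
                simpa using norm_sub_le (Complex.exp (μ * (zs - z))) 1
            _ = Real.exp ((μ * (zs - z)).re) + 1 := by rw [Complex.norm_exp]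
        calc ‖Complex.exp ((m : ℂ) * ws + (n : ℂ) * z)‖
              * ‖Complex.exp (μ * (zs - z)) - 1‖
            ≤ Real.exp (((m : ℂ) * ws + (n : ℂ) * z).re)
                * (Real.exp ((μ * (zs - z)).re) + 1) := by
              rw [Complex.norm_exp]
              exact mul_le_mul_of_nonneg_left h21 (Real.exp_pos _).le
          _ = Real.exp (((m : ℂ) * ws + (n : ℂ) * z).re) * Real.exp ((μ * (zs - z)).re)
                + Real.exp (((m : ℂ) * ws + (n : ℂ) * z).re) := by ring
          _ ≤ r ^ m * ρ ^ n * (Real.exp ((zs / lam).re) * Real.exp ((-z / lam).re))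
                + r ^ m * ρ ^ n * ((ρ ^ a)⁻¹ * Real.exp Bc * Real.exp ((-z / lam).re)) :=
              add_le_add hA hB
          _ = r ^ m * ρ ^ n * (E * Real.exp ((-z / lam).re)) := by rw [hEdef]; ring
      have hG' : ‖G n m‖ ≤ C * ((ρ + ε) ^ n)⁻¹ * ((r + ε) ^ m)⁻¹ := by
        simpa [zpow_neg, zpow_natCast] using hG n m
      calc ‖G n m *
              (Complex.exp ((m : ℂ) * ws + (n : ℂ) * z)
                * (Complex.exp (μ * (zs - z)) - 1) / μ)‖
          = ‖G n m‖ * (‖Complex.exp ((m : ℂ) * ws + (n : ℂ) * z)‖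
              * ‖Complex.exp (μ * (zs - z)) - 1‖) / ‖μ‖ := habsrw
        _ ≤ (C * ((ρ + ε) ^ n)⁻¹ * ((r + ε) ^ m)⁻¹)
              * (r ^ m * ρ ^ n * (E * Real.exp ((-z / lam).re))) / c := by
            apply div_le_div₀ (by positivity) _ hc hμabs
            exact mul_le_mul hG' hnum
              (mul_nonneg (norm_nonneg _) (norm_nonneg _)) (by positivity)
        _ = D * Real.exp ((-z / lam).re) * (qρ ^ n * qm ^ m) := by
            rw [hDdef, hqρdef, hqmdef, div_pow, div_pow]
            field_simp
    · rw [if_neg hcase]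
      simp only [norm_zero]
      positivity
  have hsummable : Summable (fun nm : ℕ × ℕ => ‖(if a ≤ nm.1 ∧ 1 ≤ nm.2 then
          G nm.1 nm.2 *
            (Complex.exp ((nm.2 : ℂ) * ws + (nm.1 : ℂ) * z)
              * (Complex.exp (((nm.1 : ℂ) + (nm.2 : ℂ) / lam) * (zs - z)) - 1)
              / ((nm.1 : ℂ) + (nm.2 : ℂ) / lam))
        else 0 : ℂ)‖) :=
    Summable.of_nonneg_of_le (fun _ => norm_nonneg _) hbound
      (hprod.mul_left _)
  refine ⟨hsummable, ?_⟩
  calc ‖∑' nm : ℕ × ℕ,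
          (if a ≤ nm.1 ∧ 1 ≤ nm.2 then
            G nm.1 nm.2 *
              (Complex.exp ((nm.2 : ℂ) * ws + (nm.1 : ℂ) * z)
                * (Complex.exp (((nm.1 : ℂ) + (nm.2 : ℂ) / lam) * (zs - z)) - 1)
                / ((nm.1 : ℂ) + (nm.2 : ℂ) / lam))
          else 0)‖
      ≤ ∑' nm : ℕ × ℕ, ‖(if a ≤ nm.1 ∧ 1 ≤ nm.2 then
            G nm.1 nm.2 *
              (Complex.exp ((nm.2 : ℂ) * ws + (nm.1 : ℂ) * z)
                * (Complex.exp (((nm.1 : ℂ) + (nm.2 : ℂ) / lam) * (zs - z)) - 1)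
                / ((nm.1 : ℂ) + (nm.2 : ℂ) / lam))
          else 0 : ℂ)‖ := by
        have hs' : Summable (fun nm : ℕ × ℕ => ‖(if a ≤ nm.1 ∧ 1 ≤ nm.2 then
            G nm.1 nm.2 *
              (Complex.exp ((nm.2 : ℂ) * ws + (nm.1 : ℂ) * z)
                * (Complex.exp (((nm.1 : ℂ) + (nm.2 : ℂ) / lam) * (zs - z)) - 1)
                / ((nm.1 : ℂ) + (nm.2 : ℂ) / lam))
          else 0 : ℂ)‖) := by
          simpa using hsummable
        simpa using norm_tsum_le_tsum_norm hs'
    _ ≤ ∑' nm : ℕ × ℕ, D * Real.exp ((-z / lam).re) * (qρ ^ nm.1 * qm ^ nm.2) :=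
        Summable.tsum_le_tsum hbound hsummable (hprod.mul_left _)
    _ = D * Real.exp ((-z / lam).re) * S := by rw [hSdef, tsum_mul_left]
    _ ≤ (D * S + 1) * Real.exp ((-z / lam).re) := by
        nlinarith [Real.exp_pos ((-z / lam).re)]
end
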